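/- arXiv:0806.1079 — 3 statements merged into one kernel-verified Lean document; each statement's English description precedes it below -/
import Mathlib

section
/- In a strict bicategory B, let f : a ⟶ b, f' : a' ⟶ b', f'' : a'' ⟶ b'' be 1-morphisms; let s₁ : a ⟶ a', s̄₁ : a' ⟶ a, t₁ : b ⟶ b', t̄₁ : b' ⟶ b and s₂ : a' ⟶ a'', s̄₂ : a'' ⟶ a', t₂ : b' ⟶ b'', t̄₂ : b'' ⟶ b' satisfy the strict inverse equations (s₁ ≫ s̄₁ = 𝟙 a, s̄₁ ≫ s₁ = 𝟙 a', and similarly for t₁, s₂, t₂); and let κ₁ : f ≫ t₁ ⟶ s₁ ≫ f' and κ₂ : f' ≫ t₂ ⟶ s₂ ≫ f'' be invertible 2-morphisms. Define the pasted square κ₁₂ := (κ₁ ▷ t₂) ≫ (s₁ ◁ κ₂), which by strictness is an invertible 2-morphism f ≫ (t₁ ≫ t₂) ⟶ (s₁ ≫ s₂) ≫ f''. Then the transfer maps compose: r_{κ₁₂} = r_{κ₂} ∘ r_{κ₁} as maps End(f) → End(f''), where r_{κ₁₂} is formed using the strict inverses s̄₂ ≫ s̄₁ and t̄₂ ≫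 t̄₁. -/
open CategoryTheory Bicategory

/-- The transfer map `r_κ : End(f) → End(f')` induced by an equivalence square
`κ : f ≫ t ⟶ s ≫ f'` with a strict inverse `sb` of `s`:
`r_κ(η) := (sb ◁ κ)⁻¹ ≫ (sb ◁ (η ▷ t)) ≫ (sb ◁ κ)`, where the strict identification
`sb ≫ s ≫ f' = f'` is implemented by `eqToHom e`. -/
noncomputable def transferMap {B : Type*} [Bicategory B] [Bicategory.Strict B] {a b a' b' : B}
    {f : a ⟶ b} {f' : a' ⟶ b'} (s : a ⟶ a') (sb : a' ⟶ a) (t : b ⟶ b')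
    (κ : f ≫ t ⟶ s ≫ f') [IsIso κ] (e : sb ≫ s ≫ f' = f') (η : f ⟶ f) : f' ⟶ f' :=
  eqToHom e.symm ≫ inv (sb ◁ κ) ≫ (sb ◁ (η ▷ t)) ≫ (sb ◁ κ) ≫ eqToHom e


section Helpers
variable {B : Type*} [Bicategory B] [Bicategory.Strict B]

lemma whiskerLeft_congr {a b c : B} {g g' : a ⟶ b} (h : g = g')
    {x y : b ⟶ c} (κ : x ⟶ y) :
    g ◁ κ = eqToHom (by rw [h]) ≫ (g' ◁ κ) ≫ eqToHom (by rw [h]) := by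
  subst h; simp

lemma whiskerLeft_cancel {a b c : B} (g : a ⟶ b) (gb : b ⟶ a) (h : gb ≫ g = 𝟙 b)
    {x y : b ⟶ c} (κ : x ⟶ y) :
    gb ◁ g ◁ κ = eqToHom (by rw [← Category.assoc, h, Category.id_comp]) ≫ κ ≫
      eqToHom (by rw [← Category.assoc, h, Category.id_comp]) := by
  rw [show gb ◁ g ◁ κ = eqToHom (Category.assoc gb g x).symm ≫ ((gb ≫ g) ◁ κ) ≫
      eqToHom (Category.assoc gb g y) from by
        simp [comp_whiskerLeft, Bicategory.Strict.associator_eqToIso],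
    whiskerLeft_congr h κ]
  simp [Bicategory.Strict.leftUnitor_eqToIso]

end Helpers

/-- Transfer maps compose: for strictly invertible 1-morphism pairs
`(s₁, sb₁), (t₁, tb₁), (s₂, sb₂), (t₂, tb₂)` and invertible squares `κ₁ : f ≫ t₁ ⟶ s₁ ≫ f'`
and `κ₂ : f' ≫ t₂ ⟶ s₂ ≫ f''`, the transfer along the pasted square
`κ₁₂ = (κ₁ ▷ t₂) ≫ (s₁ ◁ κ₂) : f ≫ (t₁ ≫ t₂) ⟶ (s₁ ≫ s₂) ≫ f''`
(strictness identifications via `eqToHom`), formed with strict inverses `sb₂ ≫ sb₁` and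
`tb₂ ≫ tb₁`, equals the composite `r_{κ₂} ∘ r_{κ₁} : End(f) → End(f'')`. -/
theorem transferMap_comp {B : Type*} [Bicategory B] [Bicategory.Strict B]
    {a b a' b' a'' b'' : B} (f : a ⟶ b) (f' : a' ⟶ b') (f'' : a'' ⟶ b'')
    (s₁ : a ⟶ a') (sb₁ : a' ⟶ a) (t₁ : b ⟶ b') (tb₁ : b' ⟶ b)
    (s₂ : a' ⟶ a'') (sb₂ : a'' ⟶ a') (t₂ : b' ⟶ b'') (tb₂ : b'' ⟶ b')
    (hs₁ : s₁ ≫ sb₁ = 𝟙 a) (hs₁' : sb₁ ≫ s₁ = 𝟙 a')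
    (ht₁ : t₁ ≫ tb₁ = 𝟙 b) (ht₁' : tb₁ ≫ t₁ = 𝟙 b')
    (hs₂ : s₂ ≫ sb₂ = 𝟙 a') (hs₂' : sb₂ ≫ s₂ = 𝟙 a'')
    (ht₂ : t₂ ≫ tb₂ = 𝟙 b') (ht₂' : tb₂ ≫ t₂ = 𝟙 b'')
    (κ₁ : f ≫ t₁ ⟶ s₁ ≫ f') [IsIso κ₁]
    (κ₂ : f' ≫ t₂ ⟶ s₂ ≫ f'') [IsIso κ₂]
    (eA : f ≫ t₁ ≫ t₂ = (f ≫ t₁) ≫ t₂)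
    (eB : s₁ ≫ f' ≫ t₂ = (s₁ ≫ f') ≫ t₂)
    (eC : s₁ ≫ s₂ ≫ f'' = (s₁ ≫ s₂) ≫ f'')
    (e₁ : sb₁ ≫ s₁ ≫ f' = f')
    (e₂ : sb₂ ≫ s₂ ≫ f'' = f'')
    (e₁₂ : (sb₂ ≫ sb₁) ≫ (s₁ ≫ s₂) ≫ f'' = f'') :
    ∀ η : f ⟶ f,
      transferMap (s₁ ≫ s₂) (sb₂ ≫ sb₁) (t₁ ≫ t₂)
        (eqToHom eA ≫ (κ₁ ▷ t₂) ≫ eqToHom eB.symm ≫ (s₁ ◁ κ₂) ≫ eqToHom eC) e₁₂ η =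
      transferMap s₂ sb₂ t₂ κ₂ e₂ (transferMap s₁ sb₁ t₁ κ₁ e₁ η) := by
  intro η
  simp only [transferMap, comp_whiskerLeft, Bicategory.whiskerRight_comp, whisker_assoc,
    Bicategory.Strict.associator_eqToIso, eqToIso.hom, eqToIso.inv,
    whiskerLeft_eqToHom, eqToHom_whiskerRight, Bicategory.whiskerLeft_comp,
    Bicategory.comp_whiskerRight, eqToHom_trans, eqToHom_refl, Category.assoc,
    Category.id_comp, Category.comp_id, IsIso.inv_comp, inv_eqToHom, inv_whiskerLeft,
    whiskerLeft_cancel s₁ sb₁ hs₁']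
  simp only [inv_whiskerRight, Bicategory.whiskerLeft_comp, whiskerLeft_eqToHom,
    eqToHom_trans, eqToHom_trans_assoc, eqToHom_refl, Category.assoc, Category.id_comp,
    Category.comp_id]
end

section
/- Work in lightcone coordinates on 2-dimensional Minkowski space, so that two points p, q ∈ ℝ × ℝ are spacelike separated exactly when (q.1 − p.1) * (q.2 − p.2) < 0. Let O = Set.Ioo a₁ b₁ ×ˢ Set.Ioo a₂ b₂ and O' = Set.Ioo a₁' b₁' ×ˢ Set.Ioo a₂' b₂' be two nonempty open boxes (a₁ < b₁, a₂ < b₂, a₁' < b₁', a₂' < b₂'). Then every point of O is spacelike separated from every point of O' if and only if (b₁ ≤ a₁' and b₂' ≤ a₂) or (b₁' ≤ a₁ and b₂ ≤ a₂'). -/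
/-- In lightcone coordinates (where two points `p, q` are spacelike
separated iff `(q.1 − p.1) * (q.2 − p.2) < 0`), two nonempty open boxes
`O = Ioo a₁ b₁ ×ˢ Ioo a₂ b₂` and `O' = Ioo a₁' b₁' ×ˢ Ioo a₂' b₂'` are pointwise spacelike
separated iff `(b₁ ≤ a₁' ∧ b₂' ≤ a₂) ∨ (b₁' ≤ a₁ ∧ b₂ ≤ a₂')`. -/
theorem spacelike_separated_boxes
    (a₁ b₁ a₂ b₂ a₁' b₁' a₂' b₂' : ℝ)
    (h₁ : a₁ < b₁) (h₂ : a₂ < b₂) (h₁' : a₁' < b₁') (h₂' : a₂' < b₂') :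
    (∀ p ∈ Set.Ioo a₁ b₁ ×ˢ Set.Ioo a₂ b₂,
      ∀ q ∈ Set.Ioo a₁' b₁' ×ˢ Set.Ioo a₂' b₂',
        (q.1 - p.1) * (q.2 - p.2) < 0) ↔
      ((b₁ ≤ a₁' ∧ b₂' ≤ a₂) ∨ (b₁' ≤ a₁ ∧ b₂ ≤ a₂')) := by
  constructor
  · intro h
    by_contra hc
    push_neg at hc
    obtain ⟨hc1, hc2⟩ := hc
    rcases le_or_gt b₁ a₁' with hb | hb
    · -- b₁ ≤ a₁', so a₂ < b₂' by hc1
      have ha2 : a₂ < b₂' := hc1 hb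
      set p2 : ℝ := (a₂ + min b₂ b₂') / 2 with hp2
      have hp2a : a₂ < p2 := by
        have : a₂ < min b₂ b₂' := lt_min h₂ ha2
        simp [hp2]; linarith
      have hp2b : p2 < b₂ := by
        have := min_le_left b₂ b₂'
        simp [hp2]; linarith
      have hp2b' : p2 < b₂' := by
        have := min_le_right b₂ b₂'
        simp [hp2]; linarith
      set q2 : ℝ := (max p2 a₂' + b₂') / 2 with hq2
      have hmax : max p2 a₂' < b₂' := max_lt hp2b' h₂'
      have hq2a : a₂' < q2 := by
        have := le_max_right p2 a₂'
        simp [hq2]; linarith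
      have hq2b : q2 < b₂' := by simp [hq2]; linarith
      have hq2p : p2 < q2 := by
        have := le_max_left p2 a₂'
        simp [hq2]; linarith
      have := h ((a₁ + b₁)/2, p2) ⟨⟨by linarith, by linarith⟩, hp2a, hp2b⟩
        ((a₁' + b₁')/2, q2) ⟨⟨by linarith, by linarith⟩, hq2a, hq2b⟩
      simp only at this
      nlinarith
    · rcases le_or_gt b₁' a₁ with hb' | hb'
      · -- b₁' ≤ a₁, so a₂' < b₂ by hc2
        have ha2 : a₂' < b₂ := hc2 hb'
        set q2 : ℝ := (a₂' + min b₂' b₂) / 2 with hq2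
        have hq2a : a₂' < q2 := by
          have : a₂' < min b₂' b₂ := lt_min h₂' ha2
          simp [hq2]; linarith
        have hq2b : q2 < b₂' := by
          have := min_le_left b₂' b₂
          simp [hq2]; linarith
        have hq2b2 : q2 < b₂ := by
          have := min_le_right b₂' b₂
          simp [hq2]; linarith
        set p2 : ℝ := (max q2 a₂ + b₂) / 2 with hp2
        have hmax : max q2 a₂ < b₂ := max_lt hq2b2 h₂
        have hp2a : a₂ < p2 := by
          have := le_max_right q2 a₂
          simp [hp2]; linarith
        have hp2b : p2 < b₂ := by simp [hp2]; linarith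
        have hp2q : q2 < p2 := by
          have := le_max_left q2 a₂
          simp [hp2]; linarith
        have := h ((a₁ + b₁)/2, p2) ⟨⟨by linarith, by linarith⟩, hp2a, hp2b⟩
          ((a₁' + b₁')/2, q2) ⟨⟨by linarith, by linarith⟩, hq2a, hq2b⟩
        simp only at this
        nlinarith
      · -- first intervals overlap
        set m : ℝ := max a₁ a₁' with hm
        set M : ℝ := min b₁ b₁' with hM
        have hmM : m < M := by
          rcases max_cases a₁ a₁' with ⟨he, _⟩ | ⟨he, _⟩ <;>
            rcases min_cases b₁ b₁' with ⟨he', _⟩ | ⟨he', _⟩ <;>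
              rw [hm, hM, he, he'] <;> linarith
        set x : ℝ := (2*m + M)/3 with hx
        set y : ℝ := (m + 2*M)/3 with hy
        have hxy : x < y := by rw [hx, hy]; linarith
        have hma : a₁ ≤ m := le_max_left _ _
        have hma' : a₁' ≤ m := le_max_right _ _
        have hMb : M ≤ b₁ := min_le_left _ _
        have hMb' : M ≤ b₁' := min_le_right _ _
        have hxm : m < x := by rw [hx]; linarith
        have hyM : y < M := by rw [hy]; linarith
        have hx1 : x ∈ Set.Ioo a₁ b₁ := ⟨by linarith, by linarith⟩
        have hy1 : y ∈ Set.Ioo a₁ b₁ := ⟨by linarith, by linarith⟩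
        have hx1' : x ∈ Set.Ioo a₁' b₁' := ⟨by linarith, by linarith⟩
        have hy1' : y ∈ Set.Ioo a₁' b₁' := ⟨by linarith, by linarith⟩
        have H1 := h (x, (a₂+b₂)/2) ⟨hx1, by constructor <;> simp <;> linarith⟩
          (y, (a₂'+b₂')/2) ⟨hy1', by constructor <;> simp <;> linarith⟩
        have H2 := h (y, (a₂+b₂)/2) ⟨hy1, by constructor <;> simp <;> linarith⟩
          (x, (a₂'+b₂')/2) ⟨hx1', by constructor <;> simp <;> linarith⟩
        simp only at H1 H2
        nlinarith
  · rintro (⟨hA, hB⟩ | ⟨hA, hB⟩) ⟨p1, p2⟩ ⟨⟨hp1a, hp1b⟩, hp2a, hp2b⟩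
      ⟨q1, q2⟩ ⟨⟨hq1a, hq1b⟩, hq2a, hq2b⟩ <;> simp only at * <;> nlinarith
end

section
/- Let G and H be groups, t : H →* G a group homomorphism, and α : G →* MulAut H an action of G on H by automorphisms satisfying the crossed-module identities: t (α g h) = g * t h * g⁻¹ for all g ∈ G, h ∈ H, and α (t h) h' = h * h' * h⁻¹ for all h, h' ∈ H. Let k be a field, A a k-algebra, π : H →* Aˣ a group homomorphism into the units of A, and σ : G →* (A ≃ₐ[k] A) a group homomorphism into the k-algebra automorphisms of A, such that (a) σ (t h) a = ↑(π h) * a * ↑(π h)⁻¹ for all h ∈ H and a ∈ A, and (b) σ g ↑(π h) = ↑(π (α g h)) for all g ∈ G, h ∈ H. Then: (i) for all g ∈ G, h ∈ H, a ∈ A, ↑(π h) * σ g a = σ (t h * g) a * ↑(π h) (each π h is an intertwiner from the algebra homomorphism σ g to σ (t h * g)); and (ii) for all g₂ ∈ G and h₁, h₂ ∈ H, ↑(π (h₂ * α g₂ h₁)) = ↑(π h₂) * σ g₂ ↑(π h₁) (the assignment respects horizontal composition of 2-cells). -/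
/-- Let `(t : H →* G, α : G →* MulAut H)` be a crossed module, and let
`π : H →* Aˣ` and `σ : G →* (A ≃ₐ[k] A)` satisfy (a) `σ (t h) = π h * · * (π h)⁻¹` and
(b) `σ g (π h) = π (α g h)`. Then (i) each `π h` intertwines `σ g` and `σ (t h * g)`, and
(ii) the assignment respects horizontal composition of 2-cells:
`π (h₂ * α g₂ h₁) = π h₂ * σ g₂ (π h₁)`. These are the conditions making `g ↦ σ g`,
`h ↦ π h` a strict 2-functor from the 2-group of the crossed module to the 2-category of
algebras (the canonical 2-representation). -/
theorem crossedModule_canonical_two_representation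
    (G H : Type*) [Group G] [Group H] (t : H →* G) (α : G →* MulAut H)
    (hpeiffer₁ : ∀ (g : G) (h : H), t (α g h) = g * t h * g⁻¹)
    (hpeiffer₂ : ∀ h h' : H, α (t h) h' = h * h' * h⁻¹)
    (k : Type*) [Field k] (A : Type*) [Ring A] [Algebra k A]
    (π : H →* Aˣ) (σ : G →* (A ≃ₐ[k] A))
    (ha : ∀ (h : H) (a : A), σ (t h) a = (π h : A) * a * ((π h)⁻¹ : Aˣ))
    (hb : ∀ (g : G) (h : H), σ g (π h : A) = (π (α g h) : A)) :
    (∀ (g : G) (h : H) (a : A),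
      (π h : A) * σ g a = σ (t h * g) a * (π h : A)) ∧
    (∀ (g₂ : G) (h₁ h₂ : H),
      (π (h₂ * α g₂ h₁) : A) = (π h₂ : A) * σ g₂ (π h₁ : A)) := by
  constructor
  · intro g h a
    have : σ (t h * g) a = σ (t h) (σ g a) := by
      rw [map_mul]; rfl
    rw [this, ha]
    rw [mul_assoc, Units.inv_mul, mul_one]
  · intro g₂ h₁ h₂
    rw [hb, map_mul, Units.val_mul]
end
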